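/- Let p be a prime and q = p^f with f ≥ 1, and let Z' = ∏_{ℓ prime, ℓ ≠ p} ℤ_ℓ. Since q is a unit in ℤ_ℓ for every ℓ ≠ p, multiplication by q is an automorphism of Z'; form the semidirect product G = Z' ⋊ ℤ in which the integer n acts on Z' as multiplication by qⁿ. Then the abelianization of G is isomorphic to ℤ/(q−1)ℤ × ℤ. -/

import Mathlib

/-- The product `Z' = ∏_{ℓ prime, ℓ ≠ p} ℤ_ℓ` of the (additive groups of the) rings of
`ℓ`-adic integers over all primes `ℓ` different from `p`. -/
def PrimeToPProfinite (p : ℕ) : Type :=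
  (ℓ : {l : ℕ // l.Prime ∧ l ≠ p}) → @PadicInt ℓ.1 ⟨ℓ.2.1⟩

noncomputable instance (p : ℕ) : AddCommGroup (PrimeToPProfinite p) := by
  unfold PrimeToPProfinite; infer_instance

namespace Statement9Aux

abbrev Idx (p : ℕ) := {l : ℕ // l.Prime ∧ l ≠ p}

instance (p : ℕ) (ℓ : Idx p) : Fact ℓ.1.Prime := ⟨ℓ.2.1⟩

instance (n : ℕ) (ℓ : n.primeFactors) : Fact (ℓ.1.Prime) :=
  ⟨Nat.prime_of_mem_primeFactors ℓ.2⟩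

variable (p f : ℕ)

lemma smul_apply (n : ℕ) (x : PrimeToPProfinite p) (ℓ : Idx p) :
    (n • x) ℓ = n • (x ℓ) := rfl

lemma hq (hp : p.Prime) (hf : 1 ≤ f) : p ^ f = (p ^ f - 1) + 1 := by
  have h1 : p ≤ p ^ f := Nat.le_self_pow (by omega) p
  have := hp.two_le
  omega

lemma hm_ne (hp : p.Prime) (hf : 1 ≤ f) : p ^ f - 1 ≠ 0 := by
  have h1 : p ≤ p ^ f := Nat.le_self_pow (by omega) p
  have := hp.two_le
  omega

lemma isUnit_natCast (ℓ : Idx p) {n : ℕ} (h : ¬ (ℓ.1 ∣ n)) :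
    IsUnit (n : ℤ_[ℓ.1]) := by
  rw [PadicInt.isUnit_iff]
  have h1 : ‖((n : ℤ) : ℤ_[ℓ.1])‖ ≤ 1 := PadicInt.norm_le_one _
  have h2 : ¬ ‖((n : ℤ) : ℤ_[ℓ.1])‖ < 1 := by
    rw [PadicInt.norm_int_lt_one_iff_dvd]
    exact_mod_cast h
  rw [show ((n : ℤ) : ℤ_[ℓ.1]) = (n : ℤ_[ℓ.1]) by push_cast; ring] at h1 h2
  linarith

lemma not_dvd_q (hp : p.Prime) (ℓ : Idx p) : ¬ ℓ.1 ∣ p ^ f := fun h =>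
  ℓ.2.2 ((Nat.prime_dvd_prime_iff_eq ℓ.2.1 hp).1 (ℓ.2.1.dvd_of_dvd_pow h))

/-- Multiplication by `q = p^f` as an additive automorphism of `Z'`. -/
noncomputable def psiAdd (hp : p.Prime) :
    PrimeToPProfinite p ≃+ PrimeToPProfinite p where
  toFun x := (p ^ f) • x
  invFun x := fun ℓ => ((isUnit_natCast p ℓ (not_dvd_q p f hp ℓ)).unit⁻¹ : _) * x ℓ
  left_inv x := by
    funext ℓ
    have hu := isUnit_natCast p ℓ (not_dvd_q p f hp ℓ)
    show (hu.unit⁻¹ : _) * ((p ^ f) • x) ℓ = x ℓ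
    rw [smul_apply, nsmul_eq_mul, ← mul_assoc, hu.val_inv_mul, one_mul]
  right_inv x := by
    funext ℓ
    have hu := isUnit_natCast p ℓ (not_dvd_q p f hp ℓ)
    show ((p ^ f) • fun ℓ' => ((isUnit_natCast p ℓ' (not_dvd_q p f hp ℓ')).unit⁻¹ : _) * x ℓ') ℓ
        = x ℓ
    rw [Pi.smul_apply, nsmul_eq_mul, ← mul_assoc]
    rw [show ((p ^ f : ℕ) : ℤ_[ℓ.1]) * ((isUnit_natCast p ℓ (not_dvd_q p f hp ℓ)).unit⁻¹ : _)
        = 1 from hu.mul_val_inv, one_mul]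
  map_add' x y := smul_add _ x y

/-- The corresponding automorphism of the multiplicative version. -/
noncomputable def psi (hp : p.Prime) : MulAut (Multiplicative (PrimeToPProfinite p)) :=
  AddEquiv.toMultiplicative (psiAdd p f hp)

lemma mem_ne_p (hp : p.Prime) (hf : 1 ≤ f) {l : ℕ}
    (hl : l ∈ (p ^ f - 1).primeFactors) : l ≠ p := by
  intro h
  have h1 : l ∣ p ^ f - 1 := Nat.dvd_of_mem_primeFactors hl
  have h2 : l ∣ p ^ f := by rw [h]; exact dvd_pow_self p (by omega)
  have h3 : l ∣ 1 := by
    have := Nat.dvd_sub h2 h1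
    have h4 := hq p f hp hf
    rwa [show p ^ f - (p ^ f - 1) = 1 by omega] at this
  exact Nat.Prime.one_lt (Nat.prime_of_mem_primeFactors hl) |>.ne'
    (Nat.dvd_one.1 h3)

/-- The inclusion of prime factors of `q - 1` into primes different from `p`. -/
def emb (hp : p.Prime) (hf : 1 ≤ f) (ℓ : (p ^ f - 1).primeFactors) : Idx p :=
  ⟨ℓ.1, Nat.prime_of_mem_primeFactors ℓ.2, mem_ne_p p f hp hf ℓ.2⟩

/-- Reduction of `Z'` modulo the prime powers in `q - 1`. -/
noncomputable def proj (hp : p.Prime) (hf : 1 ≤ f) :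
    PrimeToPProfinite p →+
      ((ℓ : (p ^ f - 1).primeFactors) → ZMod (ℓ.1 ^ ((p ^ f - 1).factorization ℓ.1))) where
  toFun x := fun ℓ =>
    PadicInt.toZModPow ((p ^ f - 1).factorization ℓ.1) (x (emb p f hp hf ℓ))
  map_zero' := by funext ℓ; exact map_zero (PadicInt.toZModPow (p := (emb p f hp hf ℓ).1) _)
  map_add' x y := by funext ℓ; exact map_add (PadicInt.toZModPow (p := (emb p f hp hf ℓ).1) _) _ _

lemma prod_factors (hp : p.Prime) (hf : 1 ≤ f) :
    ∏ ℓ : (p ^ f - 1).primeFactors, ℓ.1 ^ ((p ^ f - 1).factorization ℓ.1) = p ^ f - 1 := by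
  calc ∏ ℓ : (p ^ f - 1).primeFactors, ℓ.1 ^ ((p ^ f - 1).factorization ℓ.1)
      = ∏ ℓ ∈ (p ^ f - 1).primeFactors.attach, ℓ.1 ^ ((p ^ f - 1).factorization ℓ.1) := rfl
    _ = ∏ l ∈ (p ^ f - 1).primeFactors, l ^ ((p ^ f - 1).factorization l) :=
        Finset.prod_attach ((p ^ f - 1).primeFactors)
          (fun l => l ^ ((p ^ f - 1).factorization l))
    _ = p ^ f - 1 := Nat.factorization_prod_pow_eq_self (hm_ne p f hp hf)

lemma copr (hp : p.Prime) (hf : 1 ≤ f) :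
    Pairwise (Function.onFun Nat.Coprime fun ℓ : (p ^ f - 1).primeFactors =>
      ℓ.1 ^ ((p ^ f - 1).factorization ℓ.1)) := by
  intro i j hij
  exact Nat.Coprime.pow _ _ ((Nat.coprime_primes (Nat.prime_of_mem_primeFactors i.2)
        (Nat.prime_of_mem_primeFactors j.2)).2
      (fun h => hij (Subtype.ext h)))

/-- The reduction `Z' →+ ℤ/(q-1)` via CRT. -/
noncomputable def phi (hp : p.Prime) (hf : 1 ≤ f) :
    PrimeToPProfinite p →+ ZMod (p ^ f - 1) :=
  (((ZMod.prodEquivPi _ (copr p f hp hf)).symm.trans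
      (ZMod.ringEquivCongr (prod_factors p f hp hf))).toAddEquiv.toAddMonoidHom).comp
    (proj p f hp hf)

lemma proj_apply (hp : p.Prime) (hf : 1 ≤ f) (x : PrimeToPProfinite p)
    (ℓ : (p ^ f - 1).primeFactors) :
    proj p f hp hf x ℓ =
      PadicInt.toZModPow ((p ^ f - 1).factorization ℓ.1) (x (emb p f hp hf ℓ)) := rfl

lemma proj_surj (hp : p.Prime) (hf : 1 ≤ f) :
    Function.Surjective (proj p f hp hf) := by
  intro y
  refine ⟨show PrimeToPProfinite p from fun ℓ => if h : ℓ.1 ∈ (p ^ f - 1).primeFactors then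
      (((y ⟨ℓ.1, h⟩).val : ℕ) : ℤ_[ℓ.1]) else 0, ?_⟩
  funext ℓ
  rw [proj_apply]
  have hcond : (emb p f hp hf ℓ).1 ∈ (p ^ f - 1).primeFactors := ℓ.2
  rw [dif_pos hcond]
  have he : (⟨(emb p f hp hf ℓ).1, hcond⟩ : {x // x ∈ (p ^ f - 1).primeFactors}) = ℓ :=
    Subtype.ext rfl
  rw [he]
  haveI : NeZero (ℓ.1 ^ ((p ^ f - 1).factorization ℓ.1)) :=
    ⟨pow_ne_zero _ (Nat.prime_of_mem_primeFactors ℓ.2).ne_zero⟩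
  rw [map_natCast]
  exact ZMod.natCast_rightInverse (y ℓ)

lemma phi_surj (hp : p.Prime) (hf : 1 ≤ f) :
    Function.Surjective (phi p f hp hf) := by
  unfold phi
  rw [AddMonoidHom.coe_comp]
  exact (((ZMod.prodEquivPi _ (copr p f hp hf)).symm.trans
      (ZMod.ringEquivCongr (prod_factors p f hp hf))).toAddEquiv.surjective).comp
    (proj_surj p f hp hf)

lemma assoc (hp : p.Prime) (hf : 1 ≤ f) (ℓ : Idx p) :
    Associated ((ℓ.1 : ℤ_[ℓ.1]) ^ ((p ^ f - 1).factorization ℓ.1))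
      ((p ^ f - 1 : ℕ) : ℤ_[ℓ.1]) := by
  have hm := hm_ne p f hp hf
  have hcast : ((p ^ f - 1 : ℕ) : ℤ_[ℓ.1]) =
      (ℓ.1 : ℤ_[ℓ.1]) ^ ((p ^ f - 1).factorization ℓ.1) *
        (((p ^ f - 1) / ℓ.1 ^ ((p ^ f - 1).factorization ℓ.1) : ℕ) : ℤ_[ℓ.1]) := by
    rw [← Nat.cast_pow, ← Nat.cast_mul, Nat.ordProj_mul_ordCompl_eq_self]
  have hu : IsUnit (((p ^ f - 1) / ℓ.1 ^ ((p ^ f - 1).factorization ℓ.1) : ℕ) : ℤ_[ℓ.1]) :=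
    isUnit_natCast p ℓ (Nat.not_dvd_ordCompl ℓ.2.1 hm)
  rw [hcast]
  exact ⟨hu.unit, by rw [hu.unit_spec]⟩

lemma phi_eq_zero_dvd (hp : p.Prime) (hf : 1 ≤ f) (x : PrimeToPProfinite p)
    (hx : phi p f hp hf x = 0) (ℓ : Idx p) :
    ((p ^ f - 1 : ℕ) : ℤ_[ℓ.1]) ∣ x ℓ := by
  have hproj : proj p f hp hf x = 0 := by
    have h1 : (((ZMod.prodEquivPi _ (copr p f hp hf)).symm.trans
        (ZMod.ringEquivCongr (prod_factors p f hp hf))).toAddEquiv.toAddMonoidHom)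
        (proj p f hp hf x) = 0 := hx
    have h2 := congrArg (((ZMod.prodEquivPi _ (copr p f hp hf)).symm.trans
        (ZMod.ringEquivCongr (prod_factors p f hp hf))).toAddEquiv.symm) h1
    simpa using h2
  rw [← (assoc p f hp hf ℓ).dvd_iff_dvd_left]
  by_cases h : ℓ.1 ∈ (p ^ f - 1).primeFactors
  · have h0 : PadicInt.toZModPow ((p ^ f - 1).factorization ℓ.1)
        (x (emb p f hp hf ⟨ℓ.1, h⟩)) = 0 := congrFun hproj ⟨ℓ.1, h⟩
    have hemb : emb p f hp hf ⟨ℓ.1, h⟩ = ℓ := Subtype.ext rfl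
    rw [hemb] at h0
    have hker : x ℓ ∈ RingHom.ker (PadicInt.toZModPow (p := ℓ.1)
        ((p ^ f - 1).factorization ℓ.1)) := h0
    rw [PadicInt.ker_toZModPow, Ideal.mem_span_singleton] at hker
    exact hker
  · have hv : (p ^ f - 1).factorization ℓ.1 = 0 := by
      have := Finsupp.notMem_support_iff.1
        (by rw [Nat.support_factorization]; exact h)
      exact this
    rw [hv, pow_zero]
    exact one_dvd _

lemma phi_zero_smul (hp : p.Prime) (hf : 1 ≤ f) (x : PrimeToPProfinite p)
    (hx : phi p f hp hf x = 0) :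
    ∃ y : PrimeToPProfinite p, (p ^ f - 1) • y = x := by
  choose c hc using fun ℓ => phi_eq_zero_dvd p f hp hf x hx ℓ
  refine ⟨c, ?_⟩
  funext ℓ
  show (p ^ f - 1) • c ℓ = x ℓ
  rw [nsmul_eq_mul, ← hc ℓ]

lemma phi_psiAdd (hp : p.Prime) (hf : 1 ≤ f) (x : PrimeToPProfinite p) :
    phi p f hp hf ((p ^ f) • x) = phi p f hp hf x := by
  rw [map_nsmul, nsmul_eq_mul]
  have : ((p ^ f : ℕ) : ZMod (p ^ f - 1)) = 1 := by
    rw [hq p f hp hf]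
    push_cast [ZMod.natCast_self]
    ring
  rw [this, one_mul]

section Group

variable (hp : p.Prime) (hf : 1 ≤ f)

/-- `G = Z' ⋊ ℤ`. -/
noncomputable abbrev Gp :=
  SemidirectProduct (Multiplicative (PrimeToPProfinite p)) (Multiplicative ℤ)
    (zpowersHom (MulAut (Multiplicative (PrimeToPProfinite p))) (psi p f hp))

/-- First component of the abelianization map. -/
noncomputable def f1 : Multiplicative (PrimeToPProfinite p) →*
    Multiplicative (ZMod (p ^ f - 1) × ℤ) :=
  AddMonoidHom.toMultiplicative
    ((AddMonoidHom.inl (ZMod (p ^ f - 1)) ℤ).comp (phi p f hp hf))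

/-- Second component of the abelianization map. -/
noncomputable def f2 : Multiplicative ℤ →* Multiplicative (ZMod (p ^ f - 1) × ℤ) :=
  AddMonoidHom.toMultiplicative (AddMonoidHom.inr (ZMod (p ^ f - 1)) ℤ)

lemma f1_psi (n : Multiplicative (PrimeToPProfinite p)) :
    f1 p f hp hf (psi p f hp n) = f1 p f hp hf n := by
  show Multiplicative.ofAdd
      ((phi p f hp hf ((p ^ f) • Multiplicative.toAdd n)), (0 : ℤ)) =
    Multiplicative.ofAdd ((phi p f hp hf (Multiplicative.toAdd n)), (0 : ℤ))
  rw [phi_psiAdd p f hp hf]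

lemma f1_psi_zpow (z : ℤ) (n : Multiplicative (PrimeToPProfinite p)) :
    f1 p f hp hf ((psi p f hp ^ z) n) = f1 p f hp hf n := by
  have base : ∀ n, f1 p f hp hf (psi p f hp n) = f1 p f hp hf n := f1_psi p f hp hf
  have baseinv : ∀ n, f1 p f hp hf ((psi p f hp)⁻¹ n) = f1 p f hp hf n := by
    intro n
    have h1 : psi p f hp ((psi p f hp)⁻¹ n) = n := (psi p f hp).apply_symm_apply n
    rw [← base ((psi p f hp)⁻¹ n), h1]
  induction z using Int.induction_on generalizing n with
  | zero => rw [zpow_zero]; rfl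
  | succ k ih =>
      rw [zpow_add_one, MulAut.mul_apply, ih (psi p f hp n), base n]
  | pred k ih =>
      rw [zpow_sub_one, MulAut.mul_apply, ih ((psi p f hp)⁻¹ n), baseinv n]

lemma hcond (g : Multiplicative ℤ) :
    (f1 p f hp hf).comp
        ((zpowersHom (MulAut (Multiplicative (PrimeToPProfinite p))) (psi p f hp) g).toMonoidHom)
      = (MulAut.conj (f2 p f g)).toMonoidHom.comp (f1 p f hp hf) := by
  refine MonoidHom.ext fun n => ?_
  show f1 p f hp hf ((zpowersHom _ (psi p f hp) g) n)
      = MulAut.conj (f2 p f g) (f1 p f hp hf n)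
  rw [MulAut.conj_apply, mul_comm (f2 p f g) (f1 p f hp hf n), mul_inv_cancel_right]
  rw [zpowersHom_apply]
  exact f1_psi_zpow p f hp hf _ n

/-- The map from `G` to the abelian group `ℤ/(q-1) × ℤ`. -/
noncomputable def Phi : Gp p f hp →* Multiplicative (ZMod (p ^ f - 1) × ℤ) :=
  SemidirectProduct.lift (f1 p f hp hf) (f2 p f) (hcond p f hp hf)

/-- Its factorization through the abelianization. -/
noncomputable def Phi' : Abelianization (Gp p f hp) →* Multiplicative (ZMod (p ^ f - 1) × ℤ) :=
  Abelianization.lift (Phi p f hp hf)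

/-- The canonical map `Z' →+ (Abelianization G)` (additively). -/
noncomputable def chi : PrimeToPProfinite p →+ Additive (Abelianization (Gp p f hp)) :=
  MonoidHom.toAdditiveRight (Abelianization.of.comp SemidirectProduct.inl)

lemma chi_psi (x : PrimeToPProfinite p) :
    chi p f hp ((p ^ f) • x) = chi p f hp x := by
  show Additive.ofMul (Abelianization.of
      (SemidirectProduct.inl (Multiplicative.ofAdd ((p ^ f) • x))))
    = Additive.ofMul (Abelianization.of (SemidirectProduct.inl (Multiplicative.ofAdd x)))
  have hg : (zpowersHom (MulAut (Multiplicative (PrimeToPProfinite p))) (psi p f hp))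
      (Multiplicative.ofAdd (1 : ℤ)) = psi p f hp := by
    rw [zpowersHom_apply]
    exact zpow_one _
  have h3 := SemidirectProduct.inl_aut
    (φ := zpowersHom (MulAut (Multiplicative (PrimeToPProfinite p))) (psi p f hp))
    (Multiplicative.ofAdd (1 : ℤ)) (Multiplicative.ofAdd x)
  rw [hg] at h3
  have key : Abelianization.of (SemidirectProduct.inl
        (φ := zpowersHom (MulAut (Multiplicative (PrimeToPProfinite p))) (psi p f hp))
        (psi p f hp (Multiplicative.ofAdd x)))
      = Abelianization.of (SemidirectProduct.inl (Multiplicative.ofAdd x)) := by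
    rw [h3]
    simp only [map_mul, map_inv]
    rw [mul_comm (Abelianization.of (SemidirectProduct.inr (Multiplicative.ofAdd (1:ℤ))))
      (Abelianization.of (SemidirectProduct.inl (Multiplicative.ofAdd x))),
      mul_inv_cancel_right]
  exact congrArg Additive.ofMul key

lemma chi_ker (x : PrimeToPProfinite p) (hx : phi p f hp hf x = 0) :
    chi p f hp x = 0 := by
  obtain ⟨y, hy⟩ := phi_zero_smul p f hp hf x hx
  have h1 : chi p f hp ((p ^ f) • y) = chi p f hp y := chi_psi p f hp y
  rw [hq p f hp hf, succ_nsmul, map_add] at h1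
  have h2 : chi p f hp ((p ^ f - 1) • y) = 0 := by
    have h3 : chi p f hp ((p ^ f - 1) • y) + chi p f hp y = 0 + chi p f hp y := by
      rw [zero_add]; exact h1
    exact add_right_cancel h3
  rw [← hy]
  exact h2

/-- The induced map on `ℤ/(q-1)`. -/
noncomputable def alpha : ZMod (p ^ f - 1) →+ Additive (Abelianization (Gp p f hp)) :=
  (QuotientAddGroup.lift (phi p f hp hf).ker (chi p f hp)
      (fun x hx => AddMonoidHom.mem_ker.2
        (chi_ker p f hp hf x (AddMonoidHom.mem_ker.1 hx)))).comp
    (QuotientAddGroup.quotientKerEquivOfSurjective (phi p f hp hf)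
      (phi_surj p f hp hf)).symm.toAddMonoidHom

lemma alpha_phi (x : PrimeToPProfinite p) :
    alpha p f hp hf (phi p f hp hf x) = chi p f hp x := by
  have h2 : (QuotientAddGroup.quotientKerEquivOfSurjective (phi p f hp hf)
      (phi_surj p f hp hf)).symm (phi p f hp hf x) = QuotientAddGroup.mk x :=
    (AddEquiv.symm_apply_eq _).mpr rfl
  show (QuotientAddGroup.lift (phi p f hp hf).ker (chi p f hp)
      (fun x hx => AddMonoidHom.mem_ker.2
        (chi_ker p f hp hf x (AddMonoidHom.mem_ker.1 hx))))
      ((QuotientAddGroup.quotientKerEquivOfSurjective (phi p f hp hf)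
        (phi_surj p f hp hf)).symm (phi p f hp hf x)) = chi p f hp x
  rw [h2]
  rfl

/-- The backward map. -/
noncomputable def beta : (ZMod (p ^ f - 1) × ℤ) →+ Additive (Abelianization (Gp p f hp)) :=
  (alpha p f hp hf).coprod
    (MonoidHom.toAdditiveRight (Abelianization.of.comp SemidirectProduct.inr))

/-- The backward map, multiplicatively. -/
noncomputable def Psim : Multiplicative (ZMod (p ^ f - 1) × ℤ) →* Abelianization (Gp p f hp) :=
  AddMonoidHom.toMultiplicativeLeft (beta p f hp hf)

lemma Psim_f1 (n : Multiplicative (PrimeToPProfinite p)) :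
    Psim p f hp hf (f1 p f hp hf n) = Abelianization.of (SemidirectProduct.inl n) := by
  show Additive.toMul (beta p f hp hf (phi p f hp hf (Multiplicative.toAdd n), (0 : ℤ)))
    = Abelianization.of (SemidirectProduct.inl n)
  have h1 : beta p f hp hf (phi p f hp hf (Multiplicative.toAdd n), (0 : ℤ))
      = alpha p f hp hf (phi p f hp hf (Multiplicative.toAdd n)) := by
    show alpha p f hp hf (phi p f hp hf (Multiplicative.toAdd n))
        + (MonoidHom.toAdditiveRight
            (Abelianization.of.comp SemidirectProduct.inr)) (0 : ℤ) = _
    rw [map_zero, add_zero]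
  rw [h1, alpha_phi]
  rfl

lemma Psim_f2 (z : Multiplicative ℤ) :
    Psim p f hp hf (f2 p f z) = Abelianization.of (SemidirectProduct.inr z) := by
  show Additive.toMul (beta p f hp hf ((0 : ZMod (p ^ f - 1)), Multiplicative.toAdd z))
    = Abelianization.of (SemidirectProduct.inr z)
  have h1 : beta p f hp hf ((0 : ZMod (p ^ f - 1)), Multiplicative.toAdd z)
      = (MonoidHom.toAdditiveRight
          (Abelianization.of.comp SemidirectProduct.inr)) (Multiplicative.toAdd z) := by
    show alpha p f hp hf 0 + (MonoidHom.toAdditiveRight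
        (Abelianization.of.comp SemidirectProduct.inr)) (Multiplicative.toAdd z)
      = (MonoidHom.toAdditiveRight
        (Abelianization.of.comp SemidirectProduct.inr)) (Multiplicative.toAdd z)
    rw [map_zero, zero_add]
  rw [h1]
  rfl

lemma comp_left : (Psim p f hp hf).comp (Phi' p f hp hf)
    = MonoidHom.id (Abelianization (Gp p f hp)) := by
  apply Abelianization.hom_ext
  apply SemidirectProduct.hom_ext
  · refine MonoidHom.ext fun n => ?_
    show Psim p f hp hf (Phi' p f hp hf (Abelianization.of (SemidirectProduct.inl n)))
      = Abelianization.of (SemidirectProduct.inl n)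
    have h1 : Phi' p f hp hf (Abelianization.of (SemidirectProduct.inl n))
        = f1 p f hp hf n := by
      show Abelianization.lift (Phi p f hp hf) (Abelianization.of _) = _
      rw [Abelianization.lift_apply_of]
      exact SemidirectProduct.lift_inl _ _ _ _
    rw [h1, Psim_f1]
  · refine MonoidHom.ext fun z => ?_
    show Psim p f hp hf (Phi' p f hp hf (Abelianization.of (SemidirectProduct.inr z)))
      = Abelianization.of (SemidirectProduct.inr z)
    have h1 : Phi' p f hp hf (Abelianization.of (SemidirectProduct.inr z))
        = f2 p f z := by
      show Abelianization.lift (Phi p f hp hf) (Abelianization.of _) = _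
      rw [Abelianization.lift_apply_of]
      exact SemidirectProduct.lift_inr _ _ _ _
    rw [h1, Psim_f2]

lemma comp_right : (Phi' p f hp hf).comp (Psim p f hp hf)
    = MonoidHom.id (Multiplicative (ZMod (p ^ f - 1) × ℤ)) := by
  apply MonoidHom.ext
  intro w
  obtain ⟨x, hx⟩ := phi_surj p f hp hf (Multiplicative.toAdd w).1
  have hw : w = Multiplicative.ofAdd (phi p f hp hf x, (0 : ℤ))
      * Multiplicative.ofAdd ((0 : ZMod (p ^ f - 1)), (Multiplicative.toAdd w).2) := by
    rw [hx]
    show w = Multiplicative.ofAdd (((Multiplicative.toAdd w).1, (0:ℤ))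
      + ((0 : ZMod (p ^ f - 1)), (Multiplicative.toAdd w).2))
    simp
  have hf1 : Multiplicative.ofAdd (phi p f hp hf x, (0 : ℤ))
      = f1 p f hp hf (Multiplicative.ofAdd x) := rfl
  have hf2 : Multiplicative.ofAdd ((0 : ZMod (p ^ f - 1)), (Multiplicative.toAdd w).2)
      = f2 p f (Multiplicative.ofAdd (Multiplicative.toAdd w).2) := rfl
  show Phi' p f hp hf (Psim p f hp hf w) = w
  rw [hw, hf1, hf2, map_mul, map_mul, Psim_f1, Psim_f2]
  have g1 : Phi' p f hp hf (Abelianization.of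
      (SemidirectProduct.inl (Multiplicative.ofAdd x)))
      = f1 p f hp hf (Multiplicative.ofAdd x) := by
    show Abelianization.lift (Phi p f hp hf) (Abelianization.of _) = _
    rw [Abelianization.lift_apply_of]
    exact SemidirectProduct.lift_inl _ _ _ _
  have g2 : Phi' p f hp hf (Abelianization.of
      (SemidirectProduct.inr (Multiplicative.ofAdd (Multiplicative.toAdd w).2)))
      = f2 p f (Multiplicative.ofAdd (Multiplicative.toAdd w).2) := by
    show Abelianization.lift (Phi p f hp hf) (Abelianization.of _) = _
    rw [Abelianization.lift_apply_of]
    exact SemidirectProduct.lift_inr _ _ _ _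
  rw [g1, g2]

/-- The final abelianization computation. -/
noncomputable def finalEquiv :
    Additive (Abelianization (Gp p f hp)) ≃+ (ZMod (p ^ f - 1) × ℤ) :=
  MulEquiv.toAdditiveLeft
    (MonoidHom.toMulEquiv (Phi' p f hp hf) (Psim p f hp hf)
      (comp_left p f hp hf) (comp_right p f hp hf))

end Group

end Statement9Aux

theorem abelianization_tame_fundamental_group (p f : ℕ) (hp : p.Prime) (hf : 1 ≤ f) :
    ∃ ψ : MulAut (Multiplicative (PrimeToPProfinite p)),
      (∀ x : PrimeToPProfinite p,
        ψ (Multiplicative.ofAdd x) = Multiplicative.ofAdd ((p ^ f) • x)) ∧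
      Nonempty
        (Additive (Abelianization
            (SemidirectProduct (Multiplicative (PrimeToPProfinite p)) (Multiplicative ℤ)
              (zpowersHom (MulAut (Multiplicative (PrimeToPProfinite p))) ψ))) ≃+
          (ZMod (p ^ f - 1) × ℤ)) := by
  exact ⟨Statement9Aux.psi p f hp, fun x => rfl,
    ⟨Statement9Aux.finalEquiv p f hp hf⟩⟩
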